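/- Let S be a countable ℵ₀-categorical semigroup. Then: (1) S has only finitely many characteristic subsets; (2) every characteristic subsemigroup of S is ℵ₀-categorical; (3) there exists n ≥ 1 with S^n = S^{n+1}, and consequently S^n = S^m for all m ≥ n. -/
import Mathlib


/-- Two `n`-tuples of a semigroup are automorphically equivalent if some semigroup
automorphism maps one to the other componentwise. -/
def AutRel (S : Type*) [Semigroup S] {n : ℕ} (a b : Fin n → S) : Prop :=
  ∃ φ : S ≃* S, ∀ k, φ (a k) = b k

/-- A semigroup is ℵ₀-categorical if, for every `n ≥ 1`, the action of its automorphism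
group on `n`-tuples has only finitely many orbits. -/
def Aleph0Categorical (S : Type*) [Semigroup S] : Prop :=
  ∀ n : ℕ, 1 ≤ n → ∃ t : Set (Fin n → S), t.Finite ∧
    ∀ a : Fin n → S, ∃ b ∈ t, AutRel S b a

/-- A subset of a semigroup is characteristic if it is invariant under all automorphisms. -/
def IsCharacteristic (S : Type*) [Semigroup S] (A : Set S) : Prop :=
  ∀ φ : S ≃* S, φ '' A = A

/-- `prodSet S n` is the set `S^(n+1)` of all products of `n+1` elements of `S`
(so `prodSet S 0 = S^1 = S`). -/
def prodSet (S : Type*) [Semigroup S] : ℕ → Set S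
  | 0 => Set.univ
  | n + 1 => {x | ∃ a ∈ prodSet S n, ∃ b : S, x = a * b}

section Aux
variable {S : Type*} [Semigroup S]

lemma mem_of_char {A : Set S} (hA : IsCharacteristic S A) (φ : S ≃* S) {x : S}
    (hx : x ∈ A) : φ x ∈ A := by
  rw [← hA φ]; exact ⟨x, hx, rfl⟩

/-- restriction of an automorphism to a characteristic subsemigroup -/
def restrictAut (A : Subsemigroup S) (hA : IsCharacteristic S (A : Set S)) (φ : S ≃* S) :
    A ≃* A where
  toFun x := ⟨φ x, mem_of_char hA φ x.2⟩
  invFun x := ⟨φ.symm x, mem_of_char hA φ.symm x.2⟩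
  left_inv x := Subtype.ext (φ.symm_apply_apply x)
  right_inv x := Subtype.ext (φ.apply_symm_apply x)
  map_mul' x y := Subtype.ext (φ.map_mul x y)

lemma prodSet_char : ∀ n : ℕ, IsCharacteristic S (prodSet S n) := by
  intro n
  induction n with
  | zero => intro φ; simp [prodSet, Set.image_univ, φ.surjective.range_eq]
  | succ n ih =>
    intro φ
    ext x
    constructor
    · rintro ⟨y, ⟨a, ha, b, rfl⟩, rfl⟩
      exact ⟨φ a, (ih φ) ▸ ⟨a, ha, rfl⟩, φ b, φ.map_mul a b⟩
    · rintro ⟨a, ha, b, rfl⟩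
      refine ⟨φ.symm a * φ.symm b, ⟨φ.symm a, ?_, φ.symm b, rfl⟩, ?_⟩
      · rw [← ih φ.symm]; exact ⟨a, ha, rfl⟩
      · rw [map_mul, φ.apply_symm_apply, φ.apply_symm_apply]

lemma prodSet_antitone : ∀ n : ℕ, prodSet S (n + 1) ⊆ prodSet S n := by
  intro n
  induction n with
  | zero => intro x _; trivial
  | succ n ih => rintro x ⟨a, ha, b, rfl⟩; exact ⟨a, ih ha, b, rfl⟩

lemma prodSet_le {i j : ℕ} (h : i ≤ j) : prodSet S j ⊆ prodSet S i := by
  induction j with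
  | zero =>
    have : i = 0 := by omega
    subst this; exact le_refl _
  | succ j ih =>
    rcases Nat.lt_or_ge i (j+1) with h' | h'
    · exact (prodSet_antitone j).trans (ih (by omega))
    · have : i = j + 1 := by omega
      subst this; exact le_refl _

lemma prodSet_stab {n : ℕ} (h : prodSet S n = prodSet S (n + 1)) :
    ∀ m, n ≤ m → prodSet S m = prodSet S n := by
  intro m hm
  induction m with
  | zero =>
    have : n = 0 := by omega
    subst this; rfl
  | succ m ih =>
    rcases Nat.lt_or_ge n (m+1) with h' | h'
    · have hmn : n ≤ m := by omega
      have := ih hmn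
      show prodSet S (m+1) = prodSet S n
      have : prodSet S (m + 1) = prodSet S (n + 1) := by
        show {x | ∃ a ∈ prodSet S m, ∃ b : S, x = a * b} = {x | ∃ a ∈ prodSet S n, ∃ b : S, x = a * b}
        rw [ih hmn]
      rw [this, ← h]
    · have : n = m + 1 := by omega
      subst this; rfl

end Aux

/-- Let `S` be a countable ℵ₀-categorical semigroup.  Then (1) `S` has only finitely many
characteristic subsets; (2) every characteristic subsemigroup of `S` is ℵ₀-categorical;
(3) there is `n ≥ 1` with `S^n = S^(n+1)`, and consequently `S^n = S^m` for all `m ≥ n`.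
(Here `prodSet S k = S^(k+1)`.) -/
theorem aleph0Categorical_characteristic (S : Type*) [Semigroup S] [Countable S]
    (hcat : Aleph0Categorical S) :
    {A : Set S | IsCharacteristic S A}.Finite ∧
    (∀ A : Subsemigroup S, IsCharacteristic S (A : Set S) → Aleph0Categorical A) ∧
    (∃ n : ℕ, prodSet S n = prodSet S (n + 1) ∧ ∀ m : ℕ, n ≤ m → prodSet S m = prodSet S n) := by
  -- part 1
  obtain ⟨t, htfin, ht⟩ := hcat 1 le_rfl
  have part1 : {A : Set S | IsCharacteristic S A}.Finite := by
    have key : ∀ A ∈ {A : Set S | IsCharacteristic S A}, ∀ x : S,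
        x ∈ A ↔ ∃ b ∈ t, b ∈ {b : Fin 1 → S | b 0 ∈ A} ∧ AutRel S b (fun _ => x) := by
      intro A hA x
      constructor
      · intro hx
        obtain ⟨b, hb, φ, hφ⟩ := ht (fun _ => x)
        refine ⟨b, hb, ?_, φ, hφ⟩
        show b 0 ∈ A
        have h0 : b 0 = φ.symm x := by
          have h1 := hφ 0
          simp only at h1
          rw [← h1, φ.symm_apply_apply]
        rw [h0]
        exact mem_of_char hA φ.symm hx
      · rintro ⟨b, _, hbA, φ, hφ⟩
        have := hφ 0
        simp only at this
        rw [← this]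
        exact mem_of_char hA φ hbA
    apply Set.Finite.of_finite_image (f := fun A => {b ∈ t | b 0 ∈ A})
    · apply Set.Finite.subset htfin.finite_subsets
      rintro _ ⟨A, _, rfl⟩
      exact Set.sep_subset _ _
    · intro A hA B hB hAB
      ext x
      rw [key A hA x, key B hB x]
      constructor <;> rintro ⟨b, hb, hbm, hrel⟩
      · have hAB' : {b ∈ t | b 0 ∈ A} = {b ∈ t | b 0 ∈ B} := hAB
        have : b ∈ {b ∈ t | b 0 ∈ B} := hAB' ▸ (⟨hb, hbm⟩ : b ∈ {b ∈ t | b 0 ∈ A})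
        exact ⟨b, hb, this.2, hrel⟩
      · have hAB' : {b ∈ t | b 0 ∈ A} = {b ∈ t | b 0 ∈ B} := hAB
        have : b ∈ {b ∈ t | b 0 ∈ A} := hAB'.symm ▸ (⟨hb, hbm⟩ : b ∈ {b ∈ t | b 0 ∈ B})
        exact ⟨b, hb, this.2, hrel⟩
  refine ⟨part1, ?_, ?_⟩
  -- part 2
  · intro A hA n hn
    obtain ⟨u, hufin, hu⟩ := hcat n hn
    refine ⟨{b' : Fin n → A | (fun k => (b' k : S)) ∈ u}, ?_, ?_⟩
    · apply Set.Finite.of_finite_image (f := fun b' : Fin n → A => fun k => (b' k : S))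
      · exact hufin.subset (by rintro _ ⟨b', hb', rfl⟩; exact hb')
      · intro x _ y _ h
        funext k
        exact Subtype.ext (congrFun h k)
    · intro a
      obtain ⟨b, hb, φ, hφ⟩ := hu (fun k => (a k : S))
      have hbA : ∀ k, b k ∈ A := by
        intro k
        have hk : φ (b k) = (a k : S) := hφ k
        have : b k = φ.symm (a k : S) := by rw [← hk, φ.symm_apply_apply]
        rw [this]
        exact mem_of_char hA φ.symm (a k).2
      refine ⟨fun k => ⟨b k, hbA k⟩, hb, restrictAut A hA φ, fun k => ?_⟩
      exact Subtype.ext (hφ k)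
  -- part 3
  · have hmem : ∀ n : ℕ, prodSet S n ∈ {A : Set S | IsCharacteristic S A} :=
      fun n => prodSet_char n
    haveI := part1.to_subtype
    obtain ⟨i, j, hij, hpq⟩ := Finite.exists_ne_map_eq_of_infinite
      (fun n : ℕ => (⟨prodSet S n, hmem n⟩ : {A : Set S | IsCharacteristic S A}))
    have heq : prodSet S i = prodSet S j := congrArg Subtype.val hpq
    rcases Nat.lt_or_ge i j with h | h
    · have hstab : prodSet S i = prodSet S (i + 1) := by
        apply le_antisymm
        · rw [heq]; exact prodSet_le h
        · exact prodSet_antitone i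
      exact ⟨i, hstab, prodSet_stab hstab⟩
    · have hji : j < i := lt_of_le_of_ne h (fun e => hij e.symm)
      have hstab : prodSet S j = prodSet S (j + 1) := by
        apply le_antisymm
        · rw [← heq]; exact prodSet_le hji
        · exact prodSet_antitone j
      exact ⟨j, hstab, prodSet_stab hstab⟩
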